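/- Let T be a finitely generated abelian group. Then the subgroup of elements of T ⊗_ℤ K₀ fixed by 1⊗σ is exactly the image of the natural map T ⊗_ℤ ℚ_p → T ⊗_ℤ K₀, where ℚ_p embeds into K₀ via the ring homomorphism ℤ_p = W(𝔽_p) → W(𝔽_q) induced by the inclusion of finite fields. -/

import Mathlib

open TensorProduct

/-- `K₀`: the fraction field of the ring of `p`-typical Witt vectors of the finite
field `𝔽_q` with `q = p^f` elements. -/
abbrev K0 (p f : ℕ) [Fact p.Prime] : Type :=
  FractionRing (WittVector p (GaloisField p f))

/-- `ℚ_p`, realized as the fraction field of `W(𝔽_p)`. -/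
abbrev Qp (p : ℕ) [Fact p.Prime] : Type :=
  FractionRing (WittVector p (ZMod p))

/-- The Frobenius `σ` of `K₀`, induced by the Witt vector Frobenius of `W(𝔽_q)`. -/
noncomputable def sigma (p f : ℕ) [Fact p.Prime] : K0 p f ≃+* K0 p f :=
  WittVector.FractionRing.frobenius p (GaloisField p f)

/-- The embedding `ℚ_p → K₀` induced by `W(𝔽_p) → W(𝔽_q)`. -/
noncomputable def iota (p f : ℕ) [Fact p.Prime] : Qp p →+* K0 p f :=
  IsFractionRing.lift
    (g := (algebraMap (WittVector p (GaloisField p f)) (K0 p f)).comp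
      (WittVector.map (algebraMap (ZMod p) (GaloisField p f))))
    (by
      rw [RingHom.coe_comp]
      exact Function.Injective.comp (IsFractionRing.injective _ _)
        (WittVector.map_injective _ (RingHom.injective _)))

/-- `σ` as a `ℤ`-linear endomorphism of `K₀`. -/
noncomputable def sigmaLin (p f : ℕ) [Fact p.Prime] : K0 p f →ₗ[ℤ] K0 p f :=
  AddMonoidHom.toIntLinearMap (sigma p f).toRingHom.toAddMonoidHom

/-- `ι : ℚ_p → K₀` as a `ℤ`-linear map. -/
noncomputable def iotaLin (p f : ℕ) [Fact p.Prime] : Qp p →ₗ[ℤ] K0 p f :=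
  AddMonoidHom.toIntLinearMap (iota p f).toAddMonoidHom

/-- The `ℤ`-linear endomorphism `a ↦ pⁱ·σ(a)` of `K₀` (with `pⁱ ∈ K₀` the `zpow`). -/
noncomputable def twist (p f : ℕ) [Fact p.Prime] (i : ℤ) : K0 p f →ₗ[ℤ] K0 p f :=
  ((p : K0 p f) ^ i) • sigmaLin p f

namespace Aux5

variable (p f : ℕ) [Fact p.Prime]

lemma sigma_algebraMap (a : WittVector p (GaloisField p f)) :
    sigma p f (algebraMap (WittVector p (GaloisField p f)) (K0 p f) a)
      = algebraMap (WittVector p (GaloisField p f)) (K0 p f) (WittVector.frobenius a) := by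
  simp [sigma, WittVector.FractionRing.frobenius]

lemma iota_algebraMap (a : WittVector p (ZMod p)) :
    iota p f (algebraMap (WittVector p (ZMod p)) (Qp p) a)
      = algebraMap (WittVector p (GaloisField p f)) (K0 p f)
          (WittVector.map (algebraMap (ZMod p) (GaloisField p f)) a) := by
  simp [iota, IsFractionRing.lift_algebraMap]

lemma wittCast_ne_zero {n : ℕ} (hn : n ≠ 0) :
    (n : WittVector p (GaloisField p f)) ≠ 0 := by
  intro h
  obtain ⟨v, m, hm, rfl⟩ :=
    Nat.exists_eq_pow_mul_and_not_dvd hn p (Fact.out (p := p.Prime)).ne_one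
  push_cast at h
  rcases mul_eq_zero.1 h with h1 | h2
  · exact pow_ne_zero v (WittVector.irreducible p).ne_zero h1
  · have : ((m : ℕ) : GaloisField p f) = 0 := by
      simpa using congrArg (WittVector.ghostComponent 0) h2
    exact hm ((CharP.cast_eq_zero_iff (GaloisField p f) p m).1 this)

lemma wittCharZero : CharZero (WittVector p (GaloisField p f)) := by
  have : CharP (WittVector p (GaloisField p f)) 0 := by
    constructor
    intro a
    constructor
    · intro h
      rw [zero_dvd_iff]
      by_contra ha
      exact wittCast_ne_zero p f ha h
    · rintro h
      rw [zero_dvd_iff] at h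
      subst h; simp
  exact CharP.charP_to_charZero _

lemma K0CharZero : CharZero (K0 p f) := by
  haveI := wittCharZero p f
  exact charZero_of_injective_algebraMap
    (IsFractionRing.injective (WittVector p (GaloisField p f)) (K0 p f))

lemma exists_of_pow_p_eq (x : GaloisField p f) (hx : x ^ p = x) :
    ∃ a : ZMod p, algebraMap (ZMod p) (GaloisField p f) a = x := by
  classical
  have hp1 : 1 < p := (Fact.out (p := p.Prime)).one_lt
  set P : Polynomial (GaloisField p f) := Polynomial.X ^ p - Polynomial.X with hP
  have hPne : P ≠ 0 := by
    intro h
    have : P.coeff p = 0 := by rw [h]; simp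
    rw [hP] at this
    rw [Polynomial.coeff_sub, Polynomial.coeff_X_pow, if_pos rfl, Polynomial.coeff_X,
      if_neg (by omega : ¬ (1 = p)), sub_zero] at this
    exact one_ne_zero this
  have hdeg : P.natDegree ≤ p := by
    refine le_trans (Polynomial.natDegree_sub_le _ _) ?_
    simp [Polynomial.natDegree_X_pow]
    omega
  set S : Finset (GaloisField p f) :=
    (Finset.univ : Finset (ZMod p)).image (algebraMap (ZMod p) (GaloisField p f)) with hS
  have hcardS : S.card = p := by
    rw [hS, Finset.card_image_of_injective _ (algebraMap (ZMod p) (GaloisField p f)).injective]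
    simp [ZMod.card]
  by_contra hcon
  push_neg at hcon
  have hxS : x ∉ S := by
    intro hmem
    rw [hS] at hmem
    obtain ⟨a, -, ha⟩ := Finset.mem_image.1 hmem
    exact hcon a ha
  have hsub : insert x S ⊆ P.roots.toFinset := by
    intro y hy
    rw [Multiset.mem_toFinset, Polynomial.mem_roots hPne]
    have hyroot : y ^ p = y := by
      rcases Finset.mem_insert.1 hy with rfl | hyS
      · exact hx
      · obtain ⟨a, -, rfl⟩ := Finset.mem_image.1 hyS
        rw [← map_pow, ZMod.pow_card]
    simp [Polynomial.IsRoot, hP, sub_eq_zero, hyroot]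
  have hle : (insert x S).card ≤ P.roots.toFinset.card := Finset.card_le_card hsub
  rw [Finset.card_insert_of_notMem hxS, hcardS] at hle
  have : P.roots.toFinset.card ≤ p :=
    le_trans (Multiset.toFinset_card_le _) (le_trans (Polynomial.card_roots' P) hdeg)
  omega

lemma frob_map (a : WittVector p (ZMod p)) :
    WittVector.frobenius (WittVector.map (algebraMap (ZMod p) (GaloisField p f)) a)
      = WittVector.map (algebraMap (ZMod p) (GaloisField p f)) a := by
  rw [WittVector.frobenius_eq_map_frobenius]
  ext n
  simp [WittVector.map_coeff, frobenius_def, ← map_pow, ZMod.pow_card]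

lemma sigma_iota (x : Qp p) : sigma p f (iota p f x) = iota p f x := by
  obtain ⟨a, b, hb, rfl⟩ := IsFractionRing.div_surjective (A := WittVector p (ZMod p)) x
  rw [map_div₀, map_div₀, iota_algebraMap, iota_algebraMap, sigma_algebraMap, sigma_algebraMap,
    frob_map, frob_map]

lemma sigma_iterate_algebraMap (n : ℕ) (a : WittVector p (GaloisField p f)) :
    (⇑(sigma p f))^[n] (algebraMap (WittVector p (GaloisField p f)) (K0 p f) a)
      = algebraMap (WittVector p (GaloisField p f)) (K0 p f) ((⇑WittVector.frobenius)^[n] a) := by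
  induction n with
  | zero => rfl
  | succ n ih =>
      rw [Function.iterate_succ_apply', Function.iterate_succ_apply', ih, sigma_algebraMap]

lemma frob_iterate_f (hf : f ≠ 0) (a : WittVector p (GaloisField p f)) :
    (⇑WittVector.frobenius)^[f] a = a := by
  haveI : Fintype (GaloisField p f) := Fintype.ofFinite _
  ext n
  rw [WittVector.iterate_frobenius_coeff]
  have hcard : Fintype.card (GaloisField p f) = p ^ f := by
    rw [← Nat.card_eq_fintype_card, GaloisField.card p f hf]
  rw [← hcard, FiniteField.pow_card]

lemma sigma_iterate_f (hf : f ≠ 0) (c : K0 p f) : (⇑(sigma p f))^[f] c = c := by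
  have key : ∀ (n : ℕ) (x y : K0 p f),
      (⇑(sigma p f))^[n] (x / y) = (⇑(sigma p f))^[n] x / (⇑(sigma p f))^[n] y := by
    intro n
    induction n with
    | zero => intro x y; rfl
    | succ n ih =>
        intro x y
        rw [Function.iterate_succ_apply', Function.iterate_succ_apply',
          Function.iterate_succ_apply', ih, map_div₀]
  obtain ⟨a, b, hb, rfl⟩ := IsFractionRing.div_surjective (A := WittVector p (GaloisField p f)) c
  rw [key, sigma_iterate_algebraMap, sigma_iterate_algebraMap, frob_iterate_f p f hf,
    frob_iterate_f p f hf]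

lemma mem_range_iota (c : K0 p f) (hc : sigma p f c = c) : ∃ a : Qp p, iota p f a = c := by
  haveI := K0CharZero p f
  rcases eq_or_ne c 0 with rfl | hc0
  · exact ⟨0, map_zero _⟩
  obtain ⟨a, b, hb, rfl⟩ := IsFractionRing.div_surjective (A := WittVector p (GaloisField p f)) c
  have hbne : b ≠ 0 := nonZeroDivisors.ne_zero hb
  obtain ⟨m, u, hbu⟩ := WittVector.exists_eq_pow_p_mul' b hbne
  set A : WittVector p (GaloisField p f) := a * ↑u⁻¹ with hA
  have hpK : ((p : K0 p f)) ≠ 0 := Nat.cast_ne_zero.mpr (Fact.out (p := p.Prime)).ne_zero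
  have hpmK : ((p : K0 p f)) ^ m ≠ 0 := pow_ne_zero _ hpK
  have hinj := IsFractionRing.injective (WittVector p (GaloisField p f)) (K0 p f)
  have hb' : algebraMap (WittVector p (GaloisField p f)) (K0 p f) b ≠ 0 := by
    rw [Ne, map_eq_zero_iff _ hinj]; exact hbne
  have huu : (↑u⁻¹ : WittVector p (GaloisField p f)) * ↑u = 1 := u.inv_mul
  have hprod : A * b = a * (p : WittVector p (GaloisField p f)) ^ m := by
    rw [hA, hbu]
    calc a * ↑u⁻¹ * ((p : WittVector p (GaloisField p f)) ^ m * ↑u)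
        = a * (p : WittVector p (GaloisField p f)) ^ m * (↑u⁻¹ * ↑u) := by ring
      _ = a * (p : WittVector p (GaloisField p f)) ^ m := by rw [huu, mul_one]
  have hcval : algebraMap (WittVector p (GaloisField p f)) (K0 p f) a
        / algebraMap (WittVector p (GaloisField p f)) (K0 p f) b
      = algebraMap (WittVector p (GaloisField p f)) (K0 p f) A / (p : K0 p f) ^ m := by
    rw [div_eq_div_iff hb' hpmK]
    have : ((p : K0 p f)) ^ m
        = algebraMap (WittVector p (GaloisField p f)) (K0 p f)
            ((p : WittVector p (GaloisField p f)) ^ m) := by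
      rw [map_pow, map_natCast]
    rw [this, ← map_mul, ← map_mul, mul_comm A b, ← hprod, mul_comm A b]
  rw [hcval] at hc hc0 ⊢
  have hfix : WittVector.frobenius A = A := by
    have h1 : sigma p f (algebraMap (WittVector p (GaloisField p f)) (K0 p f) A
        / (p : K0 p f) ^ m)
        = algebraMap (WittVector p (GaloisField p f)) (K0 p f) (WittVector.frobenius A)
            / (p : K0 p f) ^ m := by
      rw [map_div₀, sigma_algebraMap, map_pow, map_natCast]
    rw [h1] at hc
    field_simp at hc
    exact hinj hc
  have hcoe : ∀ n, (A.coeff n) ^ p = A.coeff n := by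
    intro n
    conv_rhs => rw [← hfix]
    rw [WittVector.coeff_frobenius_charP]
  choose B hB using fun n => exists_of_pow_p_eq p f (A.coeff n) (hcoe n)
  set b0 : WittVector p (ZMod p) := WittVector.mk p B with hb0
  have hmap : WittVector.map (algebraMap (ZMod p) (GaloisField p f)) b0 = A := by
    ext n
    rw [WittVector.map_coeff]
    exact hB n
  refine ⟨algebraMap (WittVector p (ZMod p)) (Qp p) b0 / (p : Qp p) ^ m, ?_⟩
  rw [map_div₀, map_pow, map_natCast, iota_algebraMap, hmap]

lemma sigmaLin_pow_apply (n : ℕ) (c : K0 p f) :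
    (sigmaLin p f ^ n) c = (⇑(sigma p f))^[n] c := by
  rw [Module.End.pow_apply]; rfl

lemma sigma_avg (hf : f ≠ 0) (c : K0 p f) :
    sigma p f (((((f : K0 p f))⁻¹) • (∑ i ∈ Finset.range f, sigmaLin p f ^ i)) c)
      = ((((f : K0 p f))⁻¹) • (∑ i ∈ Finset.range f, sigmaLin p f ^ i)) c := by
  set g : ℕ → K0 p f := fun i => (⇑(sigma p f))^[i] c with hg
  have happ : ((((f : K0 p f))⁻¹) • (∑ i ∈ Finset.range f, sigmaLin p f ^ i)) c
      = ((f : K0 p f))⁻¹ * ∑ i ∈ Finset.range f, g i := by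
    rw [LinearMap.smul_apply, LinearMap.sum_apply, smul_eq_mul]
    congr 1
    exact Finset.sum_congr rfl fun i _ => sigmaLin_pow_apply p f i c
  have hshift : ∑ i ∈ Finset.range f, g (i + 1) = ∑ i ∈ Finset.range f, g i := by
    have h1 := Finset.sum_range_succ' g f
    have h2 := Finset.sum_range_succ g f
    have hgf : g f = c := sigma_iterate_f p f hf c
    have hg0 : g 0 = c := rfl
    have h3 := h1.symm.trans h2
    rw [hgf, hg0] at h3
    exact add_right_cancel h3
  rw [happ, map_mul, map_inv₀, map_natCast, map_sum]
  congr 1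
  rw [← hshift]
  refine Finset.sum_congr rfl fun i _ => ?_
  rw [hg]
  exact (Function.iterate_succ_apply' (⇑(sigma p f)) i c).symm

end Aux5

/-- for a finitely generated abelian group `T`, the fixed points of `1⊗σ`
on `T ⊗_ℤ K₀` are exactly the image of the natural map `T ⊗_ℤ ℚ_p → T ⊗_ℤ K₀`. -/
theorem fixedPoints_eq_range_Qp (p f : ℕ) [Fact p.Prime] (hf : f ≠ 0)
    (T : Type) [AddCommGroup T] [AddGroup.FG T] :
    {x : T ⊗[ℤ] K0 p f | TensorProduct.map (LinearMap.id : T →ₗ[ℤ] T) (sigmaLin p f) x = x}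
      = Set.range (TensorProduct.map (LinearMap.id : T →ₗ[ℤ] T) (iotaLin p f)) := by
  classical
  haveI := Aux5.K0CharZero p f
  have hf0 : (f : K0 p f) ≠ 0 := Nat.cast_ne_zero.mpr hf
  set σL := sigmaLin p f with hσL
  set ιL := iotaLin p f with hιL
  set c0 : K0 p f := ((f : K0 p f))⁻¹ with hc0
  set S : K0 p f →ₗ[ℤ] K0 p f := ∑ i ∈ Finset.range f, σL ^ i with hS
  set Pm : K0 p f →ₗ[ℤ] K0 p f := c0 • S with hPm
  have hιinj : Function.Injective ιL := (iota p f).injective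
  have hmem : ∀ c : K0 p f, Pm c ∈ LinearMap.range ιL := by
    intro c
    obtain ⟨a, ha⟩ := Aux5.mem_range_iota p f (Pm c) (Aux5.sigma_avg p f hf c)
    exact ⟨a, ha⟩
  set P' : K0 p f →ₗ[ℤ] Qp p :=
    (LinearEquiv.ofInjective ιL hιinj).symm.toLinearMap ∘ₗ
      Pm.codRestrict (LinearMap.range ιL) hmem with hP'
  have hfact : ιL ∘ₗ P' = Pm := by
    ext c
    simp only [hP', LinearMap.comp_apply, LinearEquiv.coe_coe, LinearMap.codRestrict_apply]
    exact LinearEquiv.ofInjective_symm_apply ιL _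
  ext x
  simp only [Set.mem_setOf_eq, Set.mem_range]
  constructor
  · intro hx
    have hx' : LinearMap.lTensor T σL x = x := hx
    set N : T ⊗[ℤ] K0 p f →ₗ[ℤ] T ⊗[ℤ] K0 p f := LinearMap.lTensor T σL with hN
    have hpow : ∀ i : ℕ, LinearMap.lTensor T (σL ^ i) = N ^ i := by
      intro i
      induction i with
      | zero =>
          rw [pow_zero, pow_zero, Module.End.one_eq_id, Module.End.one_eq_id, LinearMap.lTensor_id]
          rfl
      | succ i ih =>
          rw [pow_succ, pow_succ, Module.End.mul_eq_comp, Module.End.mul_eq_comp,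
            LinearMap.lTensor_comp, ih]
          rfl
    have hNx : ∀ i : ℕ, (N ^ i) x = x := by
      intro i
      induction i with
      | zero => rw [pow_zero, Module.End.one_apply]
      | succ i ih => rw [pow_succ, Module.End.mul_apply]; exact (congrArg (N ^ i) hx').trans ih
    set mulc : K0 p f →ₗ[ℤ] K0 p f := c0 • (LinearMap.id : K0 p f →ₗ[ℤ] K0 p f) with hmulc
    have hPdecomp : Pm = mulc ∘ₗ S := by
      ext c
      simp [hPm, hmulc]
    have hSx : LinearMap.lTensor T S x = f • x := by
      have h1 : LinearMap.lTensor T S = ∑ i ∈ Finset.range f, LinearMap.lTensor T (σL ^ i) := by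
        rw [hS]
        exact map_sum (LinearMap.lTensorHom T) _ _
      rw [h1, LinearMap.sum_apply]
      simp only [hpow, hNx]
      exact (Finset.sum_congr rfl (fun i _ => hNx i)).trans (by rw [Finset.sum_const, Finset.card_range])
    have hident : (f : ℕ) • mulc = LinearMap.id := by
      ext c
      simp only [LinearMap.smul_apply, hmulc, LinearMap.id_apply, smul_eq_mul]
      rw [nsmul_eq_mul, ← mul_assoc, mul_inv_cancel₀ hf0, one_mul]
    have hmain : LinearMap.lTensor T Pm x = x := by
      rw [hPdecomp, LinearMap.lTensor_comp, LinearMap.comp_apply, hSx, map_nsmul]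
      have h2 : f • LinearMap.lTensor T mulc x = ((f : ℕ) • LinearMap.lTensor T mulc) x := rfl
      have h2' : LinearMap.lTensor T ((f : ℕ) • mulc) = f • LinearMap.lTensor T mulc :=
        map_nsmul (LinearMap.lTensorHom T) (f : ℕ) mulc
      rw [h2, ← h2', hident]
      exact LinearMap.lTensor_id_apply T (K0 p f) x
    refine ⟨LinearMap.lTensor T P' x, ?_⟩
    have h3 : TensorProduct.map (LinearMap.id : T →ₗ[ℤ] T) ιL (LinearMap.lTensor T P' x)
        = LinearMap.lTensor T (ιL ∘ₗ P') x := by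
      rw [LinearMap.lTensor_comp (M := T) (g := ιL) (f := P')]
      rfl
    rw [h3, hfact]
    exact hmain
  · rintro ⟨y, rfl⟩
    have h4 : σL ∘ₗ ιL = ιL := by
      ext a
      exact Aux5.sigma_iota p f a
    have h5 := TensorProduct.map_comp (f₂ := LinearMap.id) (f₁ := (LinearMap.id : T →ₗ[ℤ] T)) (g₂ := σL) (g₁ := ιL)
    rw [LinearMap.id_comp, h4] at h5
    exact (congrFun (congrArg (fun L : _ →ₗ[ℤ] _ => ⇑L) h5.symm) y : _)
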